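/- Let p ≥ 2 be an integer, let f_1 ∈ Ω be the monotone function defined by f_1(x) = −1 if Σ_{k=1}^p x_k ≤ 1 and f_1(x) = 1 otherwise, let D ⊆ [0,1]^p be a finite design, and let v > 0 satisfy V(U(D, f_1)) ≤ v and v ≤ 1/(8·p!). Then card{ x ∈ D : 1 − 2·(p−1)!·v < Σ_{k=1}^p x_k ≤ 1 } ≥ p · 2^{−(p+1)} · ((p−1)!)^{−(p−1)} · v^{−(p−1)}. -/

import Mathlib

open MeasureTheory Set

def simplexSet (p : ℕ) (s : ℝ) : Set (Fin p → ℝ) :=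
  {y | (∀ i, 0 ≤ y i) ∧ ∑ i, y i ≤ s}

lemma measurableSet_simplexSet (p : ℕ) (s : ℝ) : MeasurableSet (simplexSet p s) := by
  have : simplexSet p s =
      (⋂ i, {y : Fin p → ℝ | 0 ≤ y i}) ∩ {y : Fin p → ℝ | ∑ i, y i ≤ s} := by
    ext y; simp [simplexSet]
  rw [this]
  exact (MeasurableSet.iInter fun i =>
    measurableSet_le measurable_const (measurable_pi_apply i)).inter
    (measurableSet_le (by fun_prop) measurable_const)

lemma volume_simplexSet (p : ℕ) : ∀ s : ℝ, 0 ≤ s →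
    volume (simplexSet p s) = ENNReal.ofReal (s ^ p / p.factorial) := by
  induction p with
  | zero =>
    intro s hs
    have h1 : simplexSet 0 s = univ := by
      ext y; simp [simplexSet, hs]
    rw [h1]
    have : (volume : Measure (Fin 0 → ℝ)) = Measure.dirac 0 := MeasureTheory.Measure.volume_pi_eq_dirac 0
    simp [this]
  | succ n ih =>
    intro s hs
    set e := MeasurableEquiv.piFinSuccAbove (fun _ : Fin (n+1) => ℝ) 0 with he
    set T : Set (ℝ × (Fin n → ℝ)) :=
      {q | 0 ≤ q.1 ∧ (∀ i, 0 ≤ q.2 i) ∧ q.1 + ∑ i, q.2 i ≤ s} with hT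
    have hTmeas : MeasurableSet T := by
      have : T = {q : ℝ × (Fin n → ℝ) | 0 ≤ q.1} ∩
          ((⋂ i, {q : ℝ × (Fin n → ℝ) | 0 ≤ q.2 i}) ∩
            {q : ℝ × (Fin n → ℝ) | q.1 + ∑ i, q.2 i ≤ s}) := by
        ext q; simp [hT]
      rw [this]
      refine (measurableSet_le measurable_const measurable_fst).inter
        ((MeasurableSet.iInter fun i => measurableSet_le measurable_const
          ((measurable_pi_apply i).comp measurable_snd)).inter
          (measurableSet_le (f := fun q : ℝ × (Fin n → ℝ) => q.1 + ∑ i, q.2 i) (by fun_prop) measurable_const))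
    have hpre : simplexSet (n+1) s = e ⁻¹' T := by
      ext y
      simp only [simplexSet, mem_setOf_eq, mem_preimage, he,
        MeasurableEquiv.piFinSuccAbove_apply, hT]
      rw [Fin.sum_univ_succ, Fin.forall_fin_succ]
      simp [Fin.succAbove_zero]
      tauto
    have hmp := measurePreserving_piFinSuccAbove (fun _ : Fin (n+1) => (volume : Measure ℝ)) 0
    have hvol : volume (simplexSet (n+1) s)
        = ((volume : Measure ℝ).prod (volume : Measure (Fin n → ℝ))) T := by
      rw [hpre]
      have := hmp.measure_preimage hTmeas.nullMeasurableSet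
      simpa [volume_pi, he] using this
    rw [hvol, Measure.prod_apply hTmeas]
    have hslice : (fun a : ℝ => volume (Prod.mk a ⁻¹' T))
        = (Icc (0:ℝ) s).indicator (fun a => ENNReal.ofReal ((s - a) ^ n / n.factorial)) := by
      funext a
      by_cases ha : a ∈ Icc (0:ℝ) s
      · have h1 : Prod.mk a ⁻¹' T = simplexSet n (s - a) := by
          ext z
          simp only [mem_preimage, hT, mem_setOf_eq, simplexSet]
          constructor
          · rintro ⟨-, h2, h3⟩; exact ⟨h2, by linarith⟩
          · rintro ⟨h2, h3⟩; exact ⟨ha.1, h2, by linarith⟩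
        rw [h1, ih (s - a) (by linarith [ha.2]), indicator_of_mem ha]
      · have h1 : Prod.mk a ⁻¹' T = ∅ := by
          ext z
          simp only [mem_preimage, hT, mem_setOf_eq, mem_empty_iff_false, iff_false]
          rintro ⟨h2, h3, h4⟩
          have hz : 0 ≤ ∑ i, z i := Finset.sum_nonneg fun i _ => h3 i
          have : a ≤ s := by linarith
          exact ha ⟨h2, this⟩
        rw [h1, indicator_of_notMem ha]
        simp
    rw [hslice, lintegral_indicator measurableSet_Icc]
    have hint : IntegrableOn (fun a : ℝ => (s - a) ^ n / n.factorial) (Icc 0 s) := by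
      apply Continuous.integrableOn_Icc
      fun_prop
    have hnn : 0 ≤ᵐ[volume.restrict (Icc (0:ℝ) s)]
        (fun a : ℝ => (s - a) ^ n / n.factorial) := by
      refine (ae_restrict_iff' measurableSet_Icc).2 (Filter.Eventually.of_forall ?_)
      intro a ha
      have h0 : (0:ℝ) ≤ s - a := by linarith [ha.2]
      positivity
    rw [← ofReal_integral_eq_lintegral_ofReal hint hnn]
    congr 1
    rw [MeasureTheory.integral_Icc_eq_integral_Ioc, ← intervalIntegral.integral_of_le hs]
    have h3 : (∫ a in (0:ℝ)..s, (s - a) ^ n / (n.factorial:ℝ))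
        = (∫ a in (0:ℝ)..s, (s - a) ^ n) / (n.factorial:ℝ) := by
      rw [intervalIntegral.integral_div]
    rw [h3]
    have h2 : (∫ a in (0:ℝ)..s, (s - a) ^ n) = ∫ u in (0:ℝ)..s, u ^ n := by
      have := intervalIntegral.integral_comp_sub_left (a := (0:ℝ)) (b := s)
        (fun u => u ^ n) s
      simpa using this
    rw [h2, integral_pow, Nat.factorial_succ]
    push_cast
    field_simp
    simp

/-- The uncertain region `U(D, f)` on the cube `[0,1]^p`. -/
def uncertainRegion (p : ℕ) (D : Set (Fin p → ℝ)) (f : (Fin p → ℝ) → ℝ) :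
    Set (Fin p → ℝ) :=
  Icc 0 1 \ ((⋃ x ∈ {y ∈ D | f y = -1}, Icc (0 : Fin p → ℝ) x) ∪
             (⋃ x ∈ {y ∈ D | f y = 1}, Icc x (1 : Fin p → ℝ)))

set_option maxHeartbeats 1600000 in
/-- Counting lemma for adaptive designs: against the monotone function `f₁` which is
`-1` iff `Σ x_k ≤ 1`, a design with uncertain volume at most `v ≤ 1/(8 p!)` must place
at least `p 2^(-(p+1)) ((p-1)!)^(-(p-1)) v^(-(p-1))` points in the slab
`{1 - 2(p-1)!v < Σ x_k ≤ 1}`. -/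
theorem design_diag_slab_card_lower_bound (p : ℕ) (hp : 2 ≤ p)
    (D : Finset (Fin p → ℝ)) (hD : ↑D ⊆ Icc (0 : Fin p → ℝ) 1)
    (v : ℝ) (hv : 0 < v) (hv' : v ≤ 1 / (8 * (p.factorial : ℝ)))
    (hvol : volume (uncertainRegion p ↑D
        (fun x => if (∑ k, x k) ≤ 1 then (-1 : ℝ) else 1)) ≤ ENNReal.ofReal v) :
    (p : ℝ) * (2 : ℝ) ^ (-((p : ℤ) + 1)) * (((p - 1).factorial : ℝ)) ^ (-((p : ℤ) - 1)) *
        v ^ (-((p : ℤ) - 1))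
      ≤ (({x ∈ (D : Set (Fin p → ℝ)) |
            1 - 2 * ((p - 1).factorial : ℝ) * v < ∑ k, x k ∧
              ∑ k, x k ≤ 1}).ncard : ℝ) := by
  classical
  obtain ⟨q, hq⟩ : ∃ q, p = q + 1 := ⟨p - 1, by omega⟩
  set G : ℝ := ((p - 1).factorial : ℝ) with hGdef
  set F : ℝ := (p.factorial : ℝ) with hFdef
  have hG : 0 < G := by positivity
  have hF : 0 < F := by positivity
  have hFG : F = p * G := by
    rw [hFdef, hGdef, ← Nat.mul_factorial_pred (by omega : p ≠ 0)]
    push_cast; ring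
  set δ : ℝ := 2 * G * v with hδdef
  have hδ : 0 < δ := by positivity
  have hv8 : v * (8 * F) ≤ 1 := by
    have := (le_div_iff₀ (by positivity : (0:ℝ) < 8 * F)).mp hv'
    linarith
  have hpδ : (p : ℝ) * δ ≤ 1 / 4 := by
    have h1 : (p : ℝ) * δ = 2 * F * v := by rw [hδdef, hFG]; ring
    rw [h1]; linarith
  have hp2 : (2:ℝ) ≤ (p:ℝ) := by exact_mod_cast hp
  have hδ8 : δ ≤ 1 / 8 := by nlinarith
  set t : ℝ := 1 - δ with htdef
  have ht0 : 0 ≤ t := by rw [htdef]; linarith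
  have ht1 : t ≤ 1 := by rw [htdef]; linarith
  set E : Finset (Fin p → ℝ) := D.filter (fun x => t < ∑ k, x k ∧ ∑ k, x k ≤ 1) with hEdef
  set Sl : (Fin p → ℝ) → Set (Fin p → ℝ) :=
    fun x => Icc 0 x ∩ {y | t < ∑ k, y k} with hSldef
  -- covering step
  have hcover : simplexSet p 1 \ simplexSet p t ⊆
      uncertainRegion p ↑D (fun x => if (∑ k, x k) ≤ 1 then (-1 : ℝ) else 1)
        ∪ ⋃ x ∈ E, Sl x := by
    rintro y ⟨⟨hy0, hy1⟩, hy2⟩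
    have hyt : t < ∑ k, y k := by
      by_contra h
      exact hy2 ⟨hy0, le_of_not_gt h⟩
    have hyIcc : y ∈ Icc (0 : Fin p → ℝ) 1 := by
      constructor
      · intro i; exact hy0 i
      · intro i
        have := Finset.single_le_sum (fun k _ => hy0 k) (Finset.mem_univ i)
        have : y i ≤ ∑ k, y k := this
        simpa using le_trans this hy1
    by_cases hyU : y ∈ uncertainRegion p ↑D (fun x => if (∑ k, x k) ≤ 1 then (-1 : ℝ) else 1)
    · exact Or.inl hyU
    right
    have hmem : y ∈ (⋃ x ∈ {z ∈ (↑D : Set (Fin p → ℝ)) |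
            (if (∑ k, z k) ≤ 1 then (-1:ℝ) else 1) = -1}, Icc (0 : Fin p → ℝ) x) ∪
        (⋃ x ∈ {z ∈ (↑D : Set (Fin p → ℝ)) |
            (if (∑ k, z k) ≤ 1 then (-1:ℝ) else 1) = 1}, Icc x (1 : Fin p → ℝ)) := by
      by_contra h
      exact hyU ⟨hyIcc, h⟩
    rcases hmem with h | h
    · obtain ⟨x, ⟨hxD, hxf⟩, hyx⟩ := mem_iUnion₂.mp h
      have hx1 : ∑ k, x k ≤ 1 := by
        by_contra hc
        simp only [if_neg hc] at hxf
        norm_num at hxf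
      have hsumle : ∑ k, y k ≤ ∑ k, x k := Finset.sum_le_sum (fun i _ => hyx.2 i)
      have hxE : x ∈ E := by
        rw [hEdef, Finset.mem_filter]
        exact ⟨hxD, lt_of_lt_of_le hyt hsumle, hx1⟩
      exact mem_iUnion₂.mpr ⟨x, hxE, hyx, hyt⟩
    · obtain ⟨x, ⟨hxD, hxf⟩, hyx⟩ := mem_iUnion₂.mp h
      have hx1 : ¬ (∑ k, x k ≤ 1) := by
        by_contra hc
        simp only [if_pos hc] at hxf
        norm_num at hxf
      have hsumle : ∑ k, x k ≤ ∑ k, y k := Finset.sum_le_sum (fun i _ => hyx.1 i)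
      exact absurd (le_trans hsumle hy1) hx1
  -- the box volume bound
  have hbox : ∀ x ∈ E, volume (Sl x) ≤ ENNReal.ofReal (δ ^ p / F) := by
    intro x hx
    obtain ⟨hxD, hxt, hx1⟩ := Finset.mem_filter.mp hx
    have hmp : MeasurePreserving (fun y : Fin p → ℝ => x - y) volume volume :=
      Measure.measurePreserving_sub_left volume x
    have hincl : Sl x ⊆ (fun y => x - y) ⁻¹' simplexSet p δ := by
      rintro y ⟨⟨hy0, hyx⟩, hyt⟩
      constructor
      · intro i
        simp only [Pi.sub_apply, sub_nonneg]
        exact hyx i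
      · have hsub : ∑ k, (x - y) k = ∑ k, x k - ∑ k, y k := by
          simp [Finset.sum_sub_distrib]
        rw [hsub]
        have : t < ∑ k, y k := hyt
        have ht' : (1:ℝ) - t = δ := by rw [htdef]; ring
        linarith
    calc volume (Sl x) ≤ volume ((fun y => x - y) ⁻¹' simplexSet p δ) := measure_mono hincl
      _ = volume (simplexSet p δ) :=
          hmp.measure_preimage (measurableSet_simplexSet p δ).nullMeasurableSet
      _ = ENNReal.ofReal (δ ^ p / F) := volume_simplexSet p δ hδ.le
  -- the measure chain
  have hsub' : simplexSet p t ⊆ simplexSet p 1 := fun y hy => ⟨hy.1, le_trans hy.2 ht1⟩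
  have hdiff : volume (simplexSet p 1 \ simplexSet p t)
      = ENNReal.ofReal ((1 - t ^ p) / F) := by
    rw [measure_diff hsub' (measurableSet_simplexSet p t).nullMeasurableSet
        (by rw [volume_simplexSet p t ht0]; exact ENNReal.ofReal_ne_top),
      volume_simplexSet p 1 zero_le_one, volume_simplexSet p t ht0,
      ← ENNReal.ofReal_sub _ (by positivity)]
    congr 1
    rw [one_pow]
    ring
  have hchain : ENNReal.ofReal ((1 - t ^ p) / F)
      ≤ ENNReal.ofReal (v + E.card * (δ ^ p / F)) := by
    rw [← hdiff]
    calc volume (simplexSet p 1 \ simplexSet p t)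
        ≤ volume (uncertainRegion p ↑D (fun x => if (∑ k, x k) ≤ 1 then (-1 : ℝ) else 1)
            ∪ ⋃ x ∈ E, Sl x) := measure_mono hcover
      _ ≤ volume (uncertainRegion p ↑D (fun x => if (∑ k, x k) ≤ 1 then (-1 : ℝ) else 1))
            + volume (⋃ x ∈ E, Sl x) := measure_union_le _ _
      _ ≤ ENNReal.ofReal v + ∑ x ∈ E, volume (Sl x) :=
            add_le_add hvol (measure_biUnion_finset_le E Sl)
      _ ≤ ENNReal.ofReal v + ∑ _x ∈ E, ENNReal.ofReal (δ ^ p / F) :=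
            add_le_add le_rfl (Finset.sum_le_sum hbox)
      _ = ENNReal.ofReal v + E.card * ENNReal.ofReal (δ ^ p / F) := by
            rw [Finset.sum_const, nsmul_eq_mul]
      _ = ENNReal.ofReal (v + E.card * (δ ^ p / F)) := by
            have hc0 : (0:ℝ) ≤ (E.card : ℝ) := Nat.cast_nonneg _
            have hd0 : (0:ℝ) ≤ δ ^ p / F := div_nonneg (pow_nonneg hδ.le p) hF.le
            rw [ENNReal.ofReal_add hv.le (mul_nonneg hc0 hd0),
              ← ENNReal.ofReal_natCast E.card, ← ENNReal.ofReal_mul hc0]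
  have hA : (1 - t ^ p) / F ≤ v + E.card * (δ ^ p / F) :=
    (ENNReal.ofReal_le_ofReal_iff (by
      have hc0 : (0:ℝ) ≤ (E.card : ℝ) := Nat.cast_nonneg _
      have hd0 : (0:ℝ) ≤ δ ^ p / F := div_nonneg (pow_nonneg hδ.le p) hF.le
      nlinarith)).mp hchain
  have hA' : 1 - t ^ p ≤ v * F + E.card * δ ^ p := by
    have h1 := mul_le_mul_of_nonneg_right hA hF.le
    rw [div_mul_cancel₀ _ hF.ne'] at h1
    have h2 : (v + E.card * (δ ^ p / F)) * F = v * F + E.card * δ ^ p := by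
      field_simp
    linarith
  clear_value G F δ t E Sl
  -- lower bound via geometric sum and Bernoulli
  have hgeom : 1 - t ^ p = δ * ∑ i ∈ Finset.range p, t ^ i := by
    have h := geom_sum_mul t p
    have ht' : t - 1 = -δ := by rw [htdef]; ring
    linear_combination h - (∑ i ∈ Finset.range p, t ^ i) * ht'
  have hsum : (p : ℝ) * t ^ (p - 1) ≤ ∑ i ∈ Finset.range p, t ^ i := by
    have hterm : ∀ i ∈ Finset.range p, t ^ (p - 1) ≤ t ^ i := fun i hi =>
      pow_le_pow_of_le_one ht0 ht1 (by
        have := Finset.mem_range.mp hi; omega)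
    calc (p : ℝ) * t ^ (p - 1) = ∑ _i ∈ Finset.range p, t ^ (p - 1) := by
          rw [Finset.sum_const, Finset.card_range, nsmul_eq_mul]
      _ ≤ ∑ i ∈ Finset.range p, t ^ i := Finset.sum_le_sum hterm
  have hbern : 1 - ((p : ℝ) - 1) * δ ≤ t ^ (p - 1) := by
    have h := one_add_mul_le_pow (by linarith : (-2 : ℝ) ≤ -δ) (p - 1)
    have hc : ((p - 1 : ℕ) : ℝ) = (p : ℝ) - 1 := by
      rw [Nat.cast_sub (by omega : 1 ≤ p)]; norm_num
    rw [htdef]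
    calc 1 - ((p:ℝ) - 1) * δ = 1 + ((p - 1 : ℕ) : ℝ) * (-δ) := by rw [hc]; ring
      _ ≤ (1 + -δ) ^ (p - 1) := h
      _ = (1 - δ) ^ (p - 1) := by ring_nf
  have hps : ((p : ℝ) - 1) * δ ≤ 1 / 4 := by nlinarith
  have h34 : (3 : ℝ) / 4 ≤ t ^ (p - 1) := by linarith
  have hlow : (3 / 2) * F * v ≤ 1 - t ^ p := by
    rw [hgeom]
    have hp0 : (0:ℝ) ≤ (p:ℝ) := by positivity
    calc (3 / 2) * F * v = δ * ((p : ℝ) * (3 / 4)) := by rw [hδdef, hFG]; ring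
      _ ≤ δ * ((p : ℝ) * t ^ (p - 1)) := by
          apply mul_le_mul_of_nonneg_left _ hδ.le
          exact mul_le_mul_of_nonneg_left h34 hp0
      _ ≤ δ * ∑ i ∈ Finset.range p, t ^ i := mul_le_mul_of_nonneg_left hsum hδ.le
  -- extract the cardinality bound
  have hN : v * F / (2 * δ ^ p) ≤ (E.card : ℝ) := by
    rw [div_le_iff₀ (mul_pos two_pos (pow_pos hδ p))]
    nlinarith [hA', hlow]
  -- identify the set with E
  have hset : {x ∈ (D : Set (Fin p → ℝ)) | t < ∑ k, x k ∧ ∑ k, x k ≤ 1}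
      = (E : Set (Fin p → ℝ)) := by
    ext x
    simp [hEdef, Finset.mem_filter]
  rw [hset, Set.ncard_coe_finset]
  refine le_trans (le_of_eq ?_) hN
  have e1 : (-((p : ℤ) - 1)) = -((q : ℕ) : ℤ) := by simp [hq]
  have e2 : (-((p : ℤ) + 1)) = -(((q + 2 : ℕ)) : ℤ) := by push_cast [hq]; ring
  rw [e1, e2, zpow_neg, zpow_neg, zpow_neg, zpow_natCast, zpow_natCast, zpow_natCast]
  rw [hδdef, hFG, hq]
  push_cast
  rw [mul_pow, mul_pow]
  field_simp
  ring
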